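/- If r_n ≥ k, then r_{(2k+1)n} ≥ k+1. -/
import Mathlib


/-- `G(n)` can be represented by assigning to each vertex a set of at most `k`
colors (natural numbers) so that `x_i` and `y_j` share a color iff `i ≤ j`. -/
def HalfRep (n k : ℕ) : Prop :=
  ∃ X Y : Fin n → Finset ℕ,
    (∀ i, (X i).card ≤ k) ∧ (∀ j, (Y j).card ≤ k) ∧
    (∀ i j, (X i ∩ Y j).Nonempty ↔ i ≤ j)

/-- `r n` is the least `k` such that `G(n)` admits such a representation. -/
noncomputable def r (n : ℕ) : ℕ := sInf {k | HalfRep n k}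

open Finset

lemma halfRep_mono {n k k' : ℕ} (h : HalfRep n k) (hkk : k ≤ k') : HalfRep n k' := by
  obtain ⟨X, Y, hX, hY, hXY⟩ := h
  exact ⟨X, Y, fun i => (hX i).trans hkk, fun j => (hY j).trans hkk, hXY⟩

lemma halfRep_self (n : ℕ) : HalfRep n n := by
  refine ⟨fun i => Finset.Ico (i : ℕ) n, fun j => Finset.Iic (j : ℕ), ?_, ?_, ?_⟩
  · intro i
    rw [Nat.card_Ico]
    omega
  · intro j
    rw [Nat.card_Iic]
    have := j.2
    omega
  · intro i j
    constructor
    · rintro ⟨c, hc⟩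
      rw [Finset.mem_inter, Finset.mem_Ico, Finset.mem_Iic] at hc
      exact Fin.le_def.mpr (by omega)
    · intro hij
      refine ⟨(i : ℕ), ?_⟩
      rw [Finset.mem_inter, Finset.mem_Ico, Finset.mem_Iic]
      exact ⟨⟨le_refl _, i.2⟩, Fin.le_def.mp hij⟩

lemma not_halfRep_zero {n : ℕ} (hn : 1 ≤ n) : ¬ HalfRep n 0 := by
  rintro ⟨X, Y, hX, hY, hXY⟩
  have i0 : Fin n := ⟨0, hn⟩
  obtain ⟨c, hc⟩ := (hXY i0 i0).mpr (le_refl i0)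
  have : X i0 = ∅ := Finset.card_eq_zero.mp (Nat.le_zero.mp (hX i0))
  rw [Finset.mem_inter, this] at hc
  exact absurd hc.1 (Finset.notMem_empty c)

/-- The embedding of block `t`, offset `i`, into `Fin ((2k+1)n)`. -/
def emb (n k : ℕ) (t : Fin (2 * k + 1)) (i : Fin n) : Fin ((2 * k + 1) * n) :=
  ⟨t.1 * n + i.1, by
    have h1 : t.1 + 1 ≤ 2 * k + 1 := t.2
    have h2 : i.1 < n := i.2
    calc t.1 * n + i.1 < t.1 * n + n := by omega
      _ = (t.1 + 1) * n := by ring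
      _ ≤ (2 * k + 1) * n := Nat.mul_le_mul_right n h1⟩

lemma emb_lt {n k : ℕ} {t t' : Fin (2 * k + 1)} {i j : Fin n}
    (h : t < t') : emb n k t i < emb n k t' j := by
  have h1 : (t : ℕ) + 1 ≤ (t' : ℕ) := h
  have h2 : (i : ℕ) < n := i.2
  show (t : ℕ) * n + (i : ℕ) < (t' : ℕ) * n + (j : ℕ)
  calc (t : ℕ) * n + (i : ℕ) < (t : ℕ) * n + n := by omega
    _ = ((t : ℕ) + 1) * n := by ring
    _ ≤ (t' : ℕ) * n := Nat.mul_le_mul_right n h1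
    _ ≤ (t' : ℕ) * n + (j : ℕ) := Nat.le_add_right _ _

lemma emb_le_iff {n k : ℕ} {t : Fin (2 * k + 1)} {i j : Fin n} :
    emb n k t i ≤ emb n k t j ↔ i ≤ j := by
  constructor
  · intro h
    have : (t : ℕ) * n + (i : ℕ) ≤ (t : ℕ) * n + (j : ℕ) := h
    exact Fin.le_def.mpr (by omega)
  · intro h
    have : (i : ℕ) ≤ (j : ℕ) := h
    show (t : ℕ) * n + (i : ℕ) ≤ (t : ℕ) * n + (j : ℕ)
    omega

lemma key (n k : ℕ) (hn : 1 ≤ n) (hk : 1 ≤ k)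
    (h : HalfRep ((2 * k + 1) * n) k) : HalfRep n (k - 1) := by
  classical
  obtain ⟨X, Y, hX, hY, hXY⟩ := h
  set E := emb n k with hE
  -- common color gives order
  have hcol : ∀ {a b : Fin ((2 * k + 1) * n)} {c : ℕ}, c ∈ X a → c ∈ Y b → a ≤ b := by
    intro a b c h1 h2
    exact (hXY a b).mp ⟨c, Finset.mem_inter.mpr ⟨h1, h2⟩⟩
  set Xbad : Fin (2 * k + 1) → Prop := fun t =>
    ∃ i : Fin n, ∀ c ∈ X (E t i), ∃ j : Fin n, c ∈ Y (E t j) with hXbad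
  set Ybad : Fin (2 * k + 1) → Prop := fun t =>
    ∃ j : Fin n, ∀ c ∈ Y (E t j), ∃ i : Fin n, c ∈ X (E t i) with hYbad
  have i0 : Fin n := ⟨0, hn⟩
  -- witnesses for bad blocks
  let wx : Fin (2 * k + 1) → Fin n := fun t => if h : Xbad t then h.choose else i0
  have hwx : ∀ t, Xbad t → ∀ c ∈ X (E t (wx t)), ∃ j : Fin n, c ∈ Y (E t j) := by
    intro t ht
    simp only [wx, dif_pos ht]
    exact ht.choose_spec
  let wy : Fin (2 * k + 1) → Fin n := fun t => if h : Ybad t then h.choose else i0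
  have hwy : ∀ t, Ybad t → ∀ c ∈ Y (E t (wy t)), ∃ i : Fin n, c ∈ X (E t i) := by
    intro t ht
    simp only [wy, dif_pos ht]
    exact ht.choose_spec
  -- at most k blocks are x-bad
  have cardA : (univ.filter Xbad).card ≤ k := by
    rcases (univ.filter Xbad).eq_empty_or_nonempty with he | hne
    · rw [he, Finset.card_empty]; omega
    · set T := univ.filter Xbad with hT
      set tm := T.max' hne with htmdef
      have htmT : tm ∈ T := T.max'_mem hne
      set a := E tm (wx tm) with ha
      have hcover : ∀ t ∈ T, (X (E t (wx t)) ∩ Y a).Nonempty := by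
        intro t ht
        apply (hXY _ _).mpr
        rcases lt_or_eq_of_le (T.le_max' t ht) with hlt | heq
        · exact le_of_lt (emb_lt hlt)
        · rw [heq]
      let f : Fin (2 * k + 1) → ℕ := fun t =>
        if h : (X (E t (wx t)) ∩ Y a).Nonempty then h.choose else 0
      have hf : ∀ t ∈ T, f t ∈ X (E t (wx t)) ∧ f t ∈ Y a := by
        intro t ht
        have hne' := hcover t ht
        have := hne'.choose_spec
        rw [Finset.mem_inter] at this
        simpa only [f, dif_pos hne'] using this
      have hinj : Set.InjOn f T := by
        intro t ht t' ht' hft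
        by_contra hne'
        have key2 : ∀ s s' : Fin (2 * k + 1), s ∈ T → s' ∈ T → s < s' → f s = f s' → False := by
          intro s s' hs hs' hlt hfe
          have hsbad : Xbad s := (Finset.mem_filter.mp hs).2
          obtain ⟨j0, hj0⟩ := hwx s hsbad (f s) (hf s hs).1
          have hfs' : f s ∈ X (E s' (wx s')) := by rw [hfe]; exact (hf s' hs').1
          have := hcol hfs' hj0
          exact absurd this (not_le.mpr (emb_lt hlt))
        rcases lt_or_gt_of_ne hne' with hlt | hgt
        · exact key2 t t' ht ht' hlt hft
        · exact key2 t' t ht' ht hgt hft.symm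
      calc T.card ≤ (Y a).card :=
            Finset.card_le_card_of_injOn f (fun t ht => (hf t ht).2) hinj
        _ ≤ k := hY a
  -- at most k blocks are y-bad
  have cardB : (univ.filter Ybad).card ≤ k := by
    rcases (univ.filter Ybad).eq_empty_or_nonempty with he | hne
    · rw [he, Finset.card_empty]; omega
    · set T := univ.filter Ybad with hT
      set tm := T.min' hne with htmdef
      have htmT : tm ∈ T := T.min'_mem hne
      set a := E tm (wy tm) with ha
      have hcover : ∀ t ∈ T, (X a ∩ Y (E t (wy t))).Nonempty := by
        intro t ht
        apply (hXY _ _).mpr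
        rcases lt_or_eq_of_le (T.min'_le t ht) with hlt | heq
        · exact le_of_lt (emb_lt hlt)
        · exact le_of_eq (congrArg (fun s => E s (wy s)) heq)
      let f : Fin (2 * k + 1) → ℕ := fun t =>
        if h : (X a ∩ Y (E t (wy t))).Nonempty then h.choose else 0
      have hf : ∀ t ∈ T, f t ∈ X a ∧ f t ∈ Y (E t (wy t)) := by
        intro t ht
        have hne' := hcover t ht
        have := hne'.choose_spec
        rw [Finset.mem_inter] at this
        simpa only [f, dif_pos hne'] using this
      have hinj : Set.InjOn f T := by
        intro t ht t' ht' hft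
        by_contra hne'
        have key2 : ∀ s s' : Fin (2 * k + 1), s ∈ T → s' ∈ T → s < s' → f s = f s' → False := by
          intro s s' hs hs' hlt hfe
          have hsbad : Ybad s' := (Finset.mem_filter.mp hs').2
          obtain ⟨i1, hi1⟩ := hwy s' hsbad (f s') (hf s' hs').2
          have hfs : f s' ∈ Y (E s (wy s)) := by rw [← hfe]; exact (hf s hs).2
          have := hcol hi1 hfs
          exact absurd this (not_le.mpr (emb_lt hlt))
        rcases lt_or_gt_of_ne hne' with hlt | hgt
        · exact key2 t t' ht ht' hlt hft
        · exact key2 t' t ht' ht hgt hft.symm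
      calc T.card ≤ (X a).card :=
            Finset.card_le_card_of_injOn f (fun t ht => (hf t ht).1) hinj
        _ ≤ k := hX a
  -- find a good block
  obtain ⟨t, hnx, hny⟩ : ∃ t : Fin (2 * k + 1), ¬ Xbad t ∧ ¬ Ybad t := by
    by_contra hall
    push_neg at hall
    have hsub : (univ : Finset (Fin (2 * k + 1))) ⊆
        univ.filter Xbad ∪ univ.filter Ybad := by
      intro t _
      rcases Classical.em (Xbad t) with h1 | h1
      · exact Finset.mem_union_left _ (Finset.mem_filter.mpr ⟨Finset.mem_univ t, h1⟩)
      · exact Finset.mem_union_right _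
          (Finset.mem_filter.mpr ⟨Finset.mem_univ t, hall t h1⟩)
    have h1 := Finset.card_le_card hsub
    have h2 := Finset.card_union_le (univ.filter Xbad) (univ.filter Ybad)
    rw [Finset.card_univ, Fintype.card_fin] at h1
    omega
  -- build the (k-1)-representation from block t
  simp only [hXbad] at hnx
  push_neg at hnx
  simp only [hYbad] at hny
  push_neg at hny
  refine ⟨fun i => (X (E t i)).filter (fun c => ∃ j : Fin n, c ∈ Y (E t j)),
          fun j => (Y (E t j)).filter (fun c => ∃ i : Fin n, c ∈ X (E t i)),
          ?_, ?_, ?_⟩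
  · intro i
    obtain ⟨c, hcX, hc⟩ := hnx i
    have hsub : (X (E t i)).filter (fun c => ∃ j : Fin n, c ∈ Y (E t j)) ⊆
        (X (E t i)).erase c := by
      intro d hd
      rw [Finset.mem_filter] at hd
      rw [Finset.mem_erase]
      refine ⟨?_, hd.1⟩
      rintro rfl
      obtain ⟨j, hj⟩ := hd.2
      exact hc j hj
    calc ((X (E t i)).filter _).card ≤ ((X (E t i)).erase c).card :=
          Finset.card_le_card hsub
      _ = (X (E t i)).card - 1 := Finset.card_erase_of_mem hcX
      _ ≤ k - 1 := Nat.sub_le_sub_right (hX _) 1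
  · intro j
    obtain ⟨c, hcY, hc⟩ := hny j
    have hsub : (Y (E t j)).filter (fun c => ∃ i : Fin n, c ∈ X (E t i)) ⊆
        (Y (E t j)).erase c := by
      intro d hd
      rw [Finset.mem_filter] at hd
      rw [Finset.mem_erase]
      refine ⟨?_, hd.1⟩
      rintro rfl
      obtain ⟨i, hi⟩ := hd.2
      exact hc i hi
    calc ((Y (E t j)).filter _).card ≤ ((Y (E t j)).erase c).card :=
          Finset.card_le_card hsub
      _ = (Y (E t j)).card - 1 := Finset.card_erase_of_mem hcY
      _ ≤ k - 1 := Nat.sub_le_sub_right (hY _) 1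
  · intro i j
    constructor
    · rintro ⟨c, hc⟩
      rw [Finset.mem_inter, Finset.mem_filter, Finset.mem_filter] at hc
      exact emb_le_iff.mp (hcol hc.1.1 hc.2.1)
    · intro hij
      obtain ⟨c, hc⟩ := (hXY (E t i) (E t j)).mpr (emb_le_iff.mpr hij)
      rw [Finset.mem_inter] at hc
      refine ⟨c, Finset.mem_inter.mpr ⟨?_, ?_⟩⟩
      · exact Finset.mem_filter.mpr ⟨hc.1, ⟨j, hc.2⟩⟩
      · exact Finset.mem_filter.mpr ⟨hc.2, ⟨i, hc.1⟩⟩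

/-- If `r n ≥ k` then `r ((2k+1)n) ≥ k + 1`. -/
theorem r_step (n k : ℕ) (hn : 1 ≤ n) (h : k ≤ r n) :
    k + 1 ≤ r ((2 * k + 1) * n) := by
  have hN1 : 1 ≤ (2 * k + 1) * n := Nat.mul_pos (by omega) hn
  have hne : {m | HalfRep ((2 * k + 1) * n) m}.Nonempty :=
    ⟨(2 * k + 1) * n, halfRep_self _⟩
  have hmem : HalfRep ((2 * k + 1) * n) (r ((2 * k + 1) * n)) := Nat.sInf_mem hne
  by_contra hcon
  push_neg at hcon
  have hk' : r ((2 * k + 1) * n) ≤ k := by omega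
  have hNk : HalfRep ((2 * k + 1) * n) k := halfRep_mono hmem hk'
  rcases Nat.eq_zero_or_pos k with rfl | hk
  · exact not_halfRep_zero hN1 hNk
  · have hkey := key n k hn hk hNk
    have hle : r n ≤ k - 1 := Nat.sInf_le hkey
    omega
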